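/- Let H be a complex Hilbert space, let A and B be Hilbert–Schmidt operators on H, and let 0 ≤ ν ≤ 1. Let T denote the block operator [[0, A],[B*, 0]] on H ⊕ H. Then ‖A + B‖₂ ≤ √(2 w_{(2,ν)}(T)² - (1 - 2ν)² ‖A - B‖₂²) ≤ ‖A‖₂ + ‖B‖₂. -/

import Mathlib

variable {H : Type*} [NormedAddCommGroup H] [InnerProductSpace ℂ H] [CompleteSpace H]

/-- The operator `ν e^{iθ} A + (1-ν) e^{-iθ} A*`. -/
noncomputable def weightedPart {E : Type*} [NormedAddCommGroup E] [InnerProductSpace ℂ E]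
    [CompleteSpace E] (ν θ : ℝ) (A : E →L[ℂ] E) : E →L[ℂ] E :=
  ((ν : ℂ) * Complex.exp (θ * Complex.I)) • A +
    (((1 - ν : ℝ) : ℂ) * Complex.exp (-(θ * Complex.I))) • ContinuousLinearMap.adjoint A

/-- The Hilbert–Schmidt norm `‖A‖₂ = √(∑ᵢ ‖A eᵢ‖²)` computed w.r.t. a Hilbert basis `e`. -/
noncomputable def hsNorm {E : Type*} [NormedAddCommGroup E] [InnerProductSpace ℂ E]
    {ι : Type*} (e : HilbertBasis ι ℂ E) (A : E →L[ℂ] E) : ℝ :=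
  Real.sqrt (∑' i, ‖A (e i)‖ ^ 2)

/-- The trace `tr(T) = ∑ᵢ ⟨eᵢ, T eᵢ⟩` computed w.r.t. a Hilbert basis `e`. -/
noncomputable def trBasis {E : Type*} [NormedAddCommGroup E] [InnerProductSpace ℂ E]
    {ι : Type*} (e : HilbertBasis ι ℂ E) (T : E →L[ℂ] E) : ℂ :=
  ∑' i, (inner ℂ (e i) (T (e i)) : ℂ)

/-- The weighted Hilbert–Schmidt numerical radius
`w_{(2,ν)}(A) = sup_{θ ∈ ℝ} ‖ν e^{iθ} A + (1-ν) e^{-iθ} A*‖₂`. -/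
noncomputable def wHS {E : Type*} [NormedAddCommGroup E] [InnerProductSpace ℂ E]
    [CompleteSpace E] {ι : Type*} (e : HilbertBasis ι ℂ E) (ν : ℝ) (A : E →L[ℂ] E) : ℝ :=
  ⨆ θ : ℝ, hsNorm e (weightedPart ν θ A)

/-- The block operator `[[X, Y],[Z, W]]` on the Hilbert space direct sum `H ⊕₂ H`,
mapping `(x, y)` to `(Xx + Yy, Zx + Wy)`. -/
noncomputable def blockOp (X Y Z W : H →L[ℂ] H) :
    WithLp 2 (H × H) →L[ℂ] WithLp 2 (H × H) :=
  ((WithLp.prodContinuousLinearEquiv 2 ℂ H H).symm.toContinuousLinearMap).comp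
    ((((X.comp (ContinuousLinearMap.fst ℂ H H)) + (Y.comp (ContinuousLinearMap.snd ℂ H H))).prod
      ((Z.comp (ContinuousLinearMap.fst ℂ H H)) + (W.comp (ContinuousLinearMap.snd ℂ H H)))).comp
      (WithLp.prodContinuousLinearEquiv 2 ℂ H H).toContinuousLinearMap)

section Aux

open scoped ENNReal ComplexConjugate
open Submodule

set_option linter.unusedSectionVars false

theorem aux_tsum_sum_type {α β : Type*} (f : α ⊕ β → ℝ≥0∞) :
    ∑' x, f x = ∑' a, f (.inl a) + ∑' b, f (.inr b) := by
  have h1 : HasSum (fun a => f (.inl a)) (∑' a, f (.inl a)) := ENNReal.summable.hasSum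
  have h2 : HasSum (fun b => f (.inr b)) (∑' b, f (.inr b)) := ENNReal.summable.hasSum
  have h1' : HasSum ((f ∘ (↑)) : Set.range (Sum.inl : α → α ⊕ β) → ℝ≥0∞) (∑' a, f (.inl a)) :=
    ((Equiv.ofInjective Sum.inl Sum.inl_injective).hasSum_iff).1 h1
  have h2' : HasSum ((f ∘ (↑)) : Set.range (Sum.inr : β → α ⊕ β) → ℝ≥0∞) (∑' b, f (.inr b)) :=
    ((Equiv.ofInjective Sum.inr Sum.inr_injective).hasSum_iff).1 h2
  exact (h1'.add_isCompl Set.isCompl_range_inl_range_inr h2').tsum_eq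

variable {E F : Type*} [NormedAddCommGroup E] [InnerProductSpace ℂ E] [CompleteSpace E]
  [NormedAddCommGroup F] [InnerProductSpace ℂ F] [CompleteSpace F]

theorem aux_parseval {ι : Type*} (b : HilbertBasis ι ℂ E) (x : E) :
    HasSum (fun i => ‖(inner ℂ (b i) x : ℂ)‖ ^ 2) (‖x‖ ^ 2) := by
  have h := b.hasSum_inner_mul_inner x x
  have heq : ∀ i, (inner ℂ x (b i) : ℂ) * inner ℂ (b i) x = ((‖(inner ℂ (b i) x : ℂ)‖ ^ 2 : ℝ) : ℂ) := by
    intro i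
    rw [← inner_conj_symm (b i) x, RCLike.mul_conj]
    rw [RCLike.norm_conj]
    norm_cast
  simp_rw [heq] at h
  rw [inner_self_eq_norm_sq_to_K (𝕜 := ℂ)] at h
  norm_cast at h
  exact Complex.hasSum_ofReal.mp h

/-- The Hilbert–Schmidt "norm squared" valued in `ℝ≥0∞`. -/
noncomputable def hsE {ι : Type*} (b : HilbertBasis ι ℂ E) (T : E →L[ℂ] E) : ℝ≥0∞ :=
  ∑' i, ENNReal.ofReal (‖T (b i)‖ ^ 2)

theorem aux_ofReal_normsq_eq_tsum {ι : Type*} (b : HilbertBasis ι ℂ E) (x : E) :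
    ENNReal.ofReal (‖x‖ ^ 2) = ∑' i, ENNReal.ofReal (‖(inner ℂ (b i) x : ℂ)‖ ^ 2) := by
  have h := aux_parseval b x
  rw [← h.tsum_eq]
  exact ENNReal.ofReal_tsum_of_nonneg (fun i => sq_nonneg _) h.summable

theorem hsE_adjoint {ι κ : Type*} (b : HilbertBasis ι ℂ E) (c : HilbertBasis κ ℂ E)
    (T : E →L[ℂ] E) : hsE b T = hsE c (ContinuousLinearMap.adjoint T) := by
  unfold hsE
  have h1 : ∀ i, ENNReal.ofReal (‖T (b i)‖ ^ 2)
      = ∑' j, ENNReal.ofReal (‖(inner ℂ (c j) (T (b i)) : ℂ)‖ ^ 2) :=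
    fun i => aux_ofReal_normsq_eq_tsum c (T (b i))
  simp_rw [h1]
  rw [ENNReal.tsum_comm]
  congr 1
  ext j
  have h2 : ∀ i, ‖(inner ℂ (c j) (T (b i)) : ℂ)‖
      = ‖(inner ℂ (b i) ((ContinuousLinearMap.adjoint T) (c j)) : ℂ)‖ := by
    intro i
    rw [← ContinuousLinearMap.adjoint_inner_left]
    exact norm_inner_symm _ _
  simp_rw [h2]
  exact (aux_ofReal_normsq_eq_tsum b _).symm

theorem hsE_basis_indep {ι κ : Type*} (b : HilbertBasis ι ℂ E) (c : HilbertBasis κ ℂ E)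
    (T : E →L[ℂ] E) : hsE b T = hsE c T := by
  rw [hsE_adjoint b c T, hsE_adjoint c c (ContinuousLinearMap.adjoint T),
    ContinuousLinearMap.adjoint_adjoint]

theorem hsE_adjoint_self {ι : Type*} (b : HilbertBasis ι ℂ E) (T : E →L[ℂ] E) :
    hsE b (ContinuousLinearMap.adjoint T) = hsE b T := (hsE_adjoint b b T).symm

theorem hsNorm_eq_hsE {ι : Type*} (b : HilbertBasis ι ℂ E) (T : E →L[ℂ] E) :
    hsNorm b T = Real.sqrt (hsE b T).toReal := by
  by_cases hs : Summable fun i => ‖T (b i)‖ ^ 2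
  · have h : hsE b T = ENNReal.ofReal (∑' i, ‖T (b i)‖ ^ 2) :=
      (ENNReal.ofReal_tsum_of_nonneg (fun i => sq_nonneg _) hs).symm
    rw [hsNorm, h, ENNReal.toReal_ofReal (tsum_nonneg fun i => sq_nonneg _)]
  · have h : hsE b T = ⊤ := by
      by_contra hne
      apply hs
      have := ENNReal.summable_toReal hne
      convert this using 2 with i
      rw [ENNReal.toReal_ofReal (sq_nonneg _)]
    rw [hsNorm, tsum_eq_zero_of_not_summable hs, h]
    simp

theorem hsE_eq_ofReal {ι : Type*} (b : HilbertBasis ι ℂ E) (T : E →L[ℂ] E)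
    (hs : Summable fun i => ‖T (b i)‖ ^ 2) :
    hsE b T = ENNReal.ofReal (∑' i, ‖T (b i)‖ ^ 2) :=
  (ENNReal.ofReal_tsum_of_nonneg (fun i => sq_nonneg _) hs).symm

theorem aux_eq_zero_of_forall_inner_basis {ι : Type*} (b : HilbertBasis ι ℂ E) {y : E}
    (h : ∀ i, (inner ℂ (b i) y : ℂ) = 0) : y = 0 := by
  have h0 : HasSum (fun i : ι => ‖(inner ℂ (b i) y : ℂ)‖ ^ 2) 0 := by
    convert hasSum_zero with i
    simp [h i]
  have := (aux_parseval b y).unique h0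
  have hy : ‖y‖ = 0 := by nlinarith [norm_nonneg y]
  simpa using hy

/-- The vectors of the product Hilbert basis. -/
noncomputable def prodV {ι κ : Type*} (b : HilbertBasis ι ℂ E) (c : HilbertBasis κ ℂ F) :
    ι ⊕ κ → WithLp 2 (E × F) :=
  Sum.elim (fun i => (WithLp.equiv 2 (E × F)).symm (b i, 0))
    (fun j => (WithLp.equiv 2 (E × F)).symm (0, c j))

theorem prodV_orthonormal {ι κ : Type*} (b : HilbertBasis ι ℂ E) (c : HilbertBasis κ ℂ F) :
    Orthonormal ℂ (prodV b c) := by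
  classical
  rw [orthonormal_iff_ite]
  have hb := orthonormal_iff_ite.mp b.orthonormal
  have hc := orthonormal_iff_ite.mp c.orthonormal
  rintro (i | i) (j | j) <;>
    simp [prodV, WithLp.prod_inner_apply, hb, hc, Sum.inl.injEq, Sum.inr.injEq]

theorem prodV_span {ι κ : Type*} (b : HilbertBasis ι ℂ E) (c : HilbertBasis κ ℂ F) :
    (span ℂ (Set.range (prodV b c)))ᗮ = ⊥ := by
  rw [eq_bot_iff]
  intro z hz
  simp only [mem_orthogonal] at hz
  have h1 : ∀ i, (inner ℂ (b i) (z.fst) : ℂ) = 0 := by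
    intro i
    have := hz _ (subset_span ⟨Sum.inl i, rfl⟩)
    simpa [prodV, WithLp.prod_inner_apply] using this
  have h2 : ∀ j, (inner ℂ (c j) (z.snd) : ℂ) = 0 := by
    intro j
    have := hz _ (subset_span ⟨Sum.inr j, rfl⟩)
    simpa [prodV, WithLp.prod_inner_apply] using this
  have hf := aux_eq_zero_of_forall_inner_basis b h1
  have hs := aux_eq_zero_of_forall_inner_basis c h2
  simp only [mem_bot]
  exact WithLp.ofLp_injective 2 (Prod.ext hf hs)

/-- The product Hilbert basis on `E ⊕₂ F`. -/
noncomputable def prodHB {ι κ : Type*} (b : HilbertBasis ι ℂ E) (c : HilbertBasis κ ℂ F) :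
    HilbertBasis (ι ⊕ κ) ℂ (WithLp 2 (E × F)) :=
  HilbertBasis.mkOfOrthogonalEqBot (prodV_orthonormal b c) (prodV_span b c)

theorem prodHB_coe {ι κ : Type*} (b : HilbertBasis ι ℂ E) (c : HilbertBasis κ ℂ F) :
    ⇑(prodHB b c) = prodV b c :=
  HilbertBasis.coe_mkOfOrthogonalEqBot _ _

theorem aux_vec_id (ν : ℝ) (x y : E) :
    ‖(ν:ℂ) • x + ((1-ν:ℝ):ℂ) • y‖^2 + ‖(ν:ℂ) • y + ((1-ν:ℝ):ℂ) • x‖^2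
      = 2*ν*(1-ν)*‖x+y‖^2 + (1-2*ν)^2 * (‖x‖^2 + ‖y‖^2) := by
  have h1 : (ν:ℂ) • x + ((1-ν:ℝ):ℂ) • y + ((ν:ℂ) • y + ((1-ν:ℝ):ℂ) • x) = x + y := by
    push_cast; module
  have h2 : (ν:ℂ) • x + ((1-ν:ℝ):ℂ) • y - ((ν:ℂ) • y + ((1-ν:ℝ):ℂ) • x)
      = ((2*ν-1:ℝ):ℂ) • (x - y) := by push_cast; module
  have hp := parallelogram_law_with_norm ℂ ((ν:ℂ) • x + ((1-ν:ℝ):ℂ) • y)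
    ((ν:ℂ) • y + ((1-ν:ℝ):ℂ) • x)
  rw [h1, h2] at hp
  have h3 : ‖((2*ν-1:ℝ):ℂ) • (x - y)‖ = |2*ν-1| * ‖x-y‖ := by
    rw [norm_smul, Complex.norm_real, Real.norm_eq_abs]
  rw [h3] at hp
  have hq := parallelogram_law_with_norm ℂ x y
  have habs : (|2*ν-1| * ‖x-y‖)^2 = (2*ν-1)^2 * (‖x-y‖^2) := by
    rw [mul_pow, sq_abs]
  rw [habs] at hp
  nlinarith [hp, hq]

theorem aux_tsum_sqrt_triangle {ι : Type*} (F G : ι → E)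
    (hF : Summable fun i => ‖F i‖^2) (hG : Summable fun i => ‖G i‖^2) :
    Real.sqrt (∑' i, ‖F i + G i‖^2) ≤
      Real.sqrt (∑' i, ‖F i‖^2) + Real.sqrt (∑' i, ‖G i‖^2) := by
  have mem : ∀ (F : ι → E), (Summable fun i => ‖F i‖^2) → Memℓp F 2 := by
    intro F hF
    apply memℓp_gen
    convert hF using 2 with i
    norm_num
  have nrm : ∀ (f : lp (fun _ : ι => E) 2), ‖f‖ = Real.sqrt (∑' i, ‖f i‖^2) := by
    intro f
    rw [lp.norm_eq_tsum_rpow (by norm_num) f, Real.sqrt_eq_rpow]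
    norm_num
  set fe : lp (fun _ : ι => E) 2 := ⟨F, mem F hF⟩
  set ge : lp (fun _ : ι => E) 2 := ⟨G, mem G hG⟩
  have key : Real.sqrt (∑' i, ‖F i + G i‖^2) = ‖fe + ge‖ := by
    rw [nrm (fe + ge)]
    exact congrArg Real.sqrt (tsum_congr fun i => by rw [lp.coeFn_add]; rfl)
  calc Real.sqrt (∑' i, ‖F i + G i‖^2) = ‖fe + ge‖ := key
    _ ≤ ‖fe‖ + ‖ge‖ := norm_add_le _ _
    _ = _ := by rw [nrm fe, nrm ge]

theorem aux_sq_add_bound (x y : E) : ‖x + y‖^2 ≤ 2*‖x‖^2 + 2*‖y‖^2 := by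
  nlinarith [norm_add_le x y, norm_nonneg x, norm_nonneg y, norm_nonneg (x + y), sq_nonneg (‖x‖ - ‖y‖), sq_nonneg (‖x‖ + ‖y‖)]

end Aux

section Blocks

open scoped ENNReal
open ContinuousLinearMap

@[simp] theorem blockOp_apply_fst (X Y Z W : H →L[ℂ] H) (v : WithLp 2 (H × H)) :
    (blockOp X Y Z W v).fst = X v.fst + Y v.snd := rfl

@[simp] theorem blockOp_apply_snd (X Y Z W : H →L[ℂ] H) (v : WithLp 2 (H × H)) :
    (blockOp X Y Z W v).snd = Z v.fst + W v.snd := rfl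

theorem blockOp_adjoint (Y Z : H →L[ℂ] H) :
    ContinuousLinearMap.adjoint (blockOp 0 Y Z 0)
      = blockOp 0 (ContinuousLinearMap.adjoint Z) (ContinuousLinearMap.adjoint Y) 0 := by
  symm
  rw [ContinuousLinearMap.eq_adjoint_iff]
  intro x y
  simp only [WithLp.prod_inner_apply, blockOp_apply_fst, blockOp_apply_snd,
    ContinuousLinearMap.zero_apply, zero_add, add_zero,
    ContinuousLinearMap.adjoint_inner_left, ContinuousLinearMap.adjoint_inner_right,
    WithLp.ofLp_fst, WithLp.ofLp_snd]
  ring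

theorem blockOp_combo (c d : ℂ) (Y Z Y' Z' : H →L[ℂ] H) :
    c • blockOp 0 Y Z 0 + d • blockOp 0 Y' Z' 0
      = blockOp 0 (c • Y + d • Y') (c • Z + d • Z') 0 := by
  refine ContinuousLinearMap.ext fun v => ?_
  refine WithLp.ofLp_injective 2 (Prod.ext ?_ ?_) <;>
    simp [ContinuousLinearMap.add_apply, ContinuousLinearMap.smul_apply]

theorem weightedPart_blockOp (ν θ : ℝ) (A B : H →L[ℂ] H) :
    weightedPart ν θ (blockOp 0 A (ContinuousLinearMap.adjoint B) 0)
      = blockOp 0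
          (((ν:ℂ) * Complex.exp (θ*Complex.I)) • A
            + (((1-ν:ℝ):ℂ) * Complex.exp (-(θ*Complex.I))) • B)
          (((ν:ℂ) * Complex.exp (θ*Complex.I)) • ContinuousLinearMap.adjoint B
            + (((1-ν:ℝ):ℂ) * Complex.exp (-(θ*Complex.I))) • ContinuousLinearMap.adjoint A) 0 := by
  unfold weightedPart
  rw [blockOp_adjoint, ContinuousLinearMap.adjoint_adjoint, blockOp_combo]

theorem hsE_blockOp {ι κ : Type*} (e : HilbertBasis ι ℂ H)
    (f : HilbertBasis κ ℂ (WithLp 2 (H × H))) (Y Z : H →L[ℂ] H) :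
    hsE f (blockOp 0 Y Z 0) = hsE e Z + hsE e Y := by
  rw [hsE_basis_indep f (prodHB e e)]
  unfold hsE
  rw [show ⇑(prodHB e e) = prodV e e from prodHB_coe e e, aux_tsum_sum_type]
  congr 1
  · refine tsum_congr fun i => ?_
    congr 1
    rw [WithLp.prod_norm_sq_eq_of_L2]
    simp [prodV]
  · refine tsum_congr fun i => ?_
    congr 1
    rw [WithLp.prod_norm_sq_eq_of_L2]
    simp [prodV]

end Blocks

theorem stmt19 {ι κ : Type*} (e : HilbertBasis ι ℂ H)
    (f : HilbertBasis κ ℂ (WithLp 2 (H × H)))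
    (A B : H →L[ℂ] H)
    (hA : Summable fun i => ‖A (e i)‖ ^ 2) (hB : Summable fun i => ‖B (e i)‖ ^ 2)
    (ν : ℝ) (hν₀ : 0 ≤ ν) (hν₁ : ν ≤ 1) :
    hsNorm e (A + B) ≤
        Real.sqrt (2 * (wHS f ν (blockOp 0 A (ContinuousLinearMap.adjoint B) 0)) ^ 2 -
          (1 - 2 * ν) ^ 2 * (hsNorm e (A - B)) ^ 2) ∧
      Real.sqrt (2 * (wHS f ν (blockOp 0 A (ContinuousLinearMap.adjoint B) 0)) ^ 2 -
          (1 - 2 * ν) ^ 2 * (hsNorm e (A - B)) ^ 2) ≤ hsNorm e A + hsNorm e B := by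
  classical
  have hν' : (0:ℝ) ≤ 1 - ν := by linarith
  have hexp : ∀ (z : ℂ), z.re = 0 → ∀ (x : H), ‖Complex.exp z • x‖ = ‖x‖ := by
    intro z hz x
    rw [norm_smul, Complex.norm_exp, hz, Real.exp_zero, one_mul]
  have hre1 : ∀ θ : ℝ, ((θ:ℂ) * Complex.I).re = 0 := by intro θ; simp
  have hre2 : ∀ θ : ℝ, (-((θ:ℂ) * Complex.I)).re = 0 := by intro θ; simp
  set T := blockOp 0 A (ContinuousLinearMap.adjoint B) 0 with hT
  set a2 := ∑' i, ‖A (e i)‖ ^ 2 with ha2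
  set b2 := ∑' i, ‖B (e i)‖ ^ 2 with hb2
  set s2 := ∑' i, ‖A (e i) + B (e i)‖ ^ 2 with hs2
  set d2 := ∑' i, ‖A (e i) - B (e i)‖ ^ 2 with hd2
  have ha2nn : 0 ≤ a2 := tsum_nonneg fun i => sq_nonneg _
  have hb2nn : 0 ≤ b2 := tsum_nonneg fun i => sq_nonneg _
  have hs2nn : 0 ≤ s2 := tsum_nonneg fun i => sq_nonneg _
  have hd2nn : 0 ≤ d2 := tsum_nonneg fun i => sq_nonneg _
  set sa := Real.sqrt a2 with hsa
  set sb := Real.sqrt b2 with hsb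
  have hsum2 : Summable fun i => 2*‖A (e i)‖^2 + 2*‖B (e i)‖^2 :=
    (hA.mul_left 2).add (hB.mul_left 2)
  have hs : Summable fun i => ‖A (e i) + B (e i)‖ ^ 2 :=
    Summable.of_nonneg_of_le (fun i => sq_nonneg _) (fun i => aux_sq_add_bound _ _) hsum2
  have hd : Summable fun i => ‖A (e i) - B (e i)‖ ^ 2 :=
    Summable.of_nonneg_of_le (fun i => sq_nonneg _)
      (fun i => by simpa [sub_eq_add_neg] using aux_sq_add_bound (A (e i)) (-(B (e i)))) hsum2
  set C : ℝ → ℝ := fun θ => ∑' i,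
    ‖Complex.exp ((θ:ℂ) * Complex.I) • A (e i)
      + Complex.exp (-((θ:ℂ) * Complex.I)) • B (e i)‖ ^ 2 with hC
  have hCsummable : ∀ θ : ℝ, Summable fun i =>
      ‖Complex.exp ((θ:ℂ) * Complex.I) • A (e i)
        + Complex.exp (-((θ:ℂ) * Complex.I)) • B (e i)‖ ^ 2 := by
    intro θ
    refine Summable.of_nonneg_of_le (fun i => sq_nonneg _) (fun i => ?_) hsum2
    have h := aux_sq_add_bound (Complex.exp ((θ:ℂ) * Complex.I) • A (e i))
      (Complex.exp (-((θ:ℂ) * Complex.I)) • B (e i))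
    rwa [hexp _ (hre1 θ), hexp _ (hre2 θ)] at h
  have hCnn : ∀ θ, 0 ≤ C θ := fun θ => tsum_nonneg fun i => sq_nonneg _
  have hcoef : (0:ℝ) ≤ 2*ν*(1-ν) := by nlinarith
  have hFnn : ∀ θ, 0 ≤ 2*ν*(1-ν) * C θ + (1-2*ν)^2 * (a2+b2) :=
    fun θ => add_nonneg (mul_nonneg hcoef (hCnn θ))
      (mul_nonneg (sq_nonneg _) (by linarith))
  -- the key identity for each θ
  have key : ∀ θ : ℝ, hsNorm f (weightedPart ν θ T)
      = Real.sqrt (2*ν*(1-ν) * C θ + (1-2*ν)^2 * (a2+b2)) := by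
    intro θ
    set ω := Complex.exp ((θ:ℂ) * Complex.I) with hω
    set ω' := Complex.exp (-((θ:ℂ) * Complex.I)) with hω'
    set c1 := (ν:ℂ) * ω with hc1
    set c2 := ((1-ν:ℝ):ℂ) * ω' with hc2
    set U := c1 • A + c2 • B with hU
    set Zop := c1 • ContinuousLinearMap.adjoint B + c2 • ContinuousLinearMap.adjoint A with hZop
    set V := ((ν:ℂ) * ω') • B + (((1-ν:ℝ):ℂ) * ω) • A with hV
    have hωconj : (starRingEnd ℂ) ω' = ω := by
      rw [hω', hω, ← Complex.exp_conj]
      congr 1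
      simp [Complex.conj_ofReal]
    have hω'conj : (starRingEnd ℂ) ω = ω' := by
      rw [hω', hω, ← Complex.exp_conj]
      congr 1
      simp [Complex.conj_ofReal]
    have hZV : Zop = ContinuousLinearMap.adjoint V := by
      rw [hV, map_add, LinearIsometryEquiv.map_smulₛₗ, LinearIsometryEquiv.map_smulₛₗ]
      rw [hZop]
      congr 1
      · congr 1
        simp only [RingHom.coe_coe, map_mul, Complex.conj_ofReal, hωconj, hc1]
      · congr 1
        simp only [RingHom.coe_coe, map_mul, Complex.conj_ofReal, hω'conj, hc2]
    have h1 : hsE f (weightedPart ν θ T) = hsE e V + hsE e U := by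
      rw [hT, weightedPart_blockOp, hsE_blockOp e f, ← hc1, ← hc2, ← hU, ← hZop, hZV,
        hsE_adjoint_self]
    have hpt : ∀ i, ‖U (e i)‖^2 + ‖V (e i)‖^2
        = 2*ν*(1-ν)*‖ω • A (e i) + ω' • B (e i)‖^2
          + (1-2*ν)^2*(‖A (e i)‖^2 + ‖B (e i)‖^2) := by
      intro i
      have hUi : U (e i) = (ν:ℂ) • (ω • A (e i)) + ((1-ν:ℝ):ℂ) • (ω' • B (e i)) := by
        rw [hU]
        simp [ContinuousLinearMap.add_apply, ContinuousLinearMap.smul_apply, hc1, hc2, mul_smul]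
      have hVi : V (e i) = (ν:ℂ) • (ω' • B (e i)) + ((1-ν:ℝ):ℂ) • (ω • A (e i)) := by
        rw [hV]
        simp [ContinuousLinearMap.add_apply, ContinuousLinearMap.smul_apply, mul_smul]
      rw [hUi, hVi, aux_vec_id ν (ω • A (e i)) (ω' • B (e i)),
        hexp _ (hre1 θ) (A (e i)), hexp _ (hre2 θ) (B (e i))]
    have h2 : hsE e V + hsE e U = ENNReal.ofReal (2*ν*(1-ν) * C θ + (1-2*ν)^2 * (a2+b2)) := by
      unfold hsE
      rw [← ENNReal.tsum_add]
      have hptE : ∀ i, ENNReal.ofReal (‖V (e i)‖^2) + ENNReal.ofReal (‖U (e i)‖^2)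
          = ENNReal.ofReal (2*ν*(1-ν)*‖ω • A (e i) + ω' • B (e i)‖^2
              + (1-2*ν)^2*(‖A (e i)‖^2 + ‖B (e i)‖^2)) := by
        intro i
        rw [← ENNReal.ofReal_add (sq_nonneg _) (sq_nonneg _), add_comm (‖V (e i)‖^2), hpt i]
      simp_rw [hptE]
      have hGsum : Summable fun i => 2*ν*(1-ν)*‖ω • A (e i) + ω' • B (e i)‖^2
          + (1-2*ν)^2*(‖A (e i)‖^2 + ‖B (e i)‖^2) :=
        ((hCsummable θ).mul_left _).add ((hA.add hB).mul_left _)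
      have hGnn : ∀ i, 0 ≤ 2*ν*(1-ν)*‖ω • A (e i) + ω' • B (e i)‖^2
          + (1-2*ν)^2*(‖A (e i)‖^2 + ‖B (e i)‖^2) := by
        intro i
        have : (0:ℝ) ≤ ‖A (e i)‖^2 + ‖B (e i)‖^2 :=
          add_nonneg (sq_nonneg _) (sq_nonneg _)
        have h2' := mul_nonneg hcoef (sq_nonneg (‖ω • A (e i) + ω' • B (e i)‖))
        nlinarith [sq_nonneg (1-2*ν)]
      rw [← ENNReal.ofReal_tsum_of_nonneg hGnn hGsum]
      congr 1
      rw [Summable.tsum_add ((hCsummable θ).mul_left _) ((hA.add hB).mul_left _),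
        tsum_mul_left, tsum_mul_left, Summable.tsum_add hA hB]
    rw [hsNorm_eq_hsE, h1, h2, ENNReal.toReal_ofReal (hFnn θ)]
  -- bounds on C
  have hsqrtC : ∀ θ : ℝ, Real.sqrt (C θ) ≤ sa + sb := by
    intro θ
    have h := aux_tsum_sqrt_triangle
      (fun i => Complex.exp ((θ:ℂ) * Complex.I) • A (e i))
      (fun i => Complex.exp (-((θ:ℂ) * Complex.I)) • B (e i))
      (by simpa only [hexp _ (hre1 θ)] using hA)
      (by simpa only [hexp _ (hre2 θ)] using hB)
    simp only [hexp _ (hre1 θ), hexp _ (hre2 θ)] at h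
    exact h
  have hCle : ∀ θ : ℝ, C θ ≤ (sa + sb)^2 := by
    intro θ
    have h1 : Real.sqrt (C θ) ^ 2 ≤ (sa + sb)^2 :=
      pow_le_pow_left₀ (Real.sqrt_nonneg _) (hsqrtC θ) 2
    rwa [Real.sq_sqrt (hCnn θ)] at h1
  set M := 2*ν*(1-ν) * (sa+sb)^2 + (1-2*ν)^2 * (a2+b2) with hM
  have hMnn : 0 ≤ M := add_nonneg (mul_nonneg hcoef (sq_nonneg _))
      (mul_nonneg (sq_nonneg _) (by linarith))
  have hFM : ∀ θ, 2*ν*(1-ν) * C θ + (1-2*ν)^2 * (a2+b2) ≤ M :=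
    fun θ => add_le_add (mul_le_mul_of_nonneg_left (hCle θ) hcoef) le_rfl
  set W := wHS f ν T with hW
  have hbdd : BddAbove (Set.range fun θ => hsNorm f (weightedPart ν θ T)) := by
    refine ⟨Real.sqrt M, ?_⟩
    rintro x ⟨θ, rfl⟩
    show hsNorm f (weightedPart ν θ T) ≤ Real.sqrt M
    rw [key θ]
    exact Real.sqrt_le_sqrt (hFM θ)
  have hW0 : Real.sqrt (2*ν*(1-ν) * C 0 + (1-2*ν)^2 * (a2+b2)) ≤ W := by
    have h := le_ciSup hbdd 0
    rw [key 0] at h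
    exact h
  have hWM : W ≤ Real.sqrt M := by
    have h : (⨆ θ : ℝ, hsNorm f (weightedPart ν θ T)) ≤ Real.sqrt M :=
      ciSup_le fun θ => by rw [key θ]; exact Real.sqrt_le_sqrt (hFM θ)
    exact h
  have hWnn : 0 ≤ W := le_trans (Real.sqrt_nonneg _) hW0
  have hC0 : C 0 = s2 := by
    rw [hC]
    refine tsum_congr fun i => ?_
    norm_num
  -- parallelogram for sums
  have hpar : s2 + d2 = 2*(a2+b2) := by
    calc s2 + d2 = ∑' i, (‖A (e i) + B (e i)‖^2 + ‖A (e i) - B (e i)‖^2) := (Summable.tsum_add hs hd).symm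
      _ = ∑' i, 2*(‖A (e i)‖^2 + ‖B (e i)‖^2) := by
          refine tsum_congr fun i => ?_
          have hp := parallelogram_law_with_norm ℂ (A (e i)) (B (e i))
          linear_combination hp
      _ = 2*(a2+b2) := by rw [tsum_mul_left, Summable.tsum_add hA hB]
  have hs2le : s2 ≤ (sa + sb)^2 := by
    have h := aux_tsum_sqrt_triangle (fun i => A (e i)) (fun i => B (e i)) hA hB
    have h1 : Real.sqrt s2 ^ 2 ≤ (sa + sb)^2 := pow_le_pow_left₀ (Real.sqrt_nonneg _) h 2
    rwa [Real.sq_sqrt hs2nn] at h1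
  -- norms of A+B, A-B
  have hABplus : hsNorm e (A + B) = Real.sqrt s2 :=
    congrArg Real.sqrt (tsum_congr fun i => by rw [ContinuousLinearMap.add_apply])
  have hABminus : hsNorm e (A - B) = Real.sqrt d2 :=
    congrArg Real.sqrt (tsum_congr fun i => by rw [ContinuousLinearMap.sub_apply])
  have hhA : hsNorm e A = sa := rfl
  have hhB : hsNorm e B = sb := rfl
  have hdsq : (hsNorm e (A - B))^2 = d2 := by rw [hABminus, Real.sq_sqrt hd2nn]
  -- W^2 bounds
  have hF0nn := hFnn 0
  have hW2lower : 2*ν*(1-ν) * C 0 + (1-2*ν)^2 * (a2+b2) ≤ W^2 := by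
    have h1 : Real.sqrt (2*ν*(1-ν) * C 0 + (1-2*ν)^2 * (a2+b2)) ^ 2 ≤ W^2 :=
      pow_le_pow_left₀ (Real.sqrt_nonneg _) hW0 2
    rwa [Real.sq_sqrt hF0nn] at h1
  have hW2upper : W^2 ≤ M := by
    have h1 : W^2 ≤ Real.sqrt M ^ 2 := pow_le_pow_left₀ hWnn hWM 2
    rwa [Real.sq_sqrt hMnn] at h1
  rw [hC0] at hW2lower
  constructor
  · rw [hABplus, hdsq]
    apply Real.sqrt_le_sqrt
    have hid : 2*(2*ν*(1-ν) * s2 + (1-2*ν)^2 * (a2+b2)) - (1-2*ν)^2 * d2 - s2 = 0 := by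
      linear_combination (-(1-2*ν)^2) * hpar
    linarith [hW2lower]
  · rw [hdsq, hhA, hhB, hsa, hsb]
    have hid2 : 2*M - (1-2*ν)^2*d2 - 4*ν*(1-ν)*(sa+sb)^2 - (1-2*ν)^2*s2 = 0 := by
      rw [hM]; linear_combination (-(1-2*ν)^2) * hpar
    have hmul : (1-2*ν)^2 * s2 ≤ (1-2*ν)^2 * (sa+sb)^2 :=
      mul_le_mul_of_nonneg_left hs2le (sq_nonneg _)
    have hcomb : 4*ν*(1-ν)*(sa+sb)^2 + (1-2*ν)^2*(sa+sb)^2 = (sa+sb)^2 := by ring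
    have hfin : 2*W^2 - (1-2*ν)^2*d2 ≤ (sa+sb)^2 := by linarith
    calc Real.sqrt (2*W^2 - (1-2*ν)^2*d2) ≤ Real.sqrt ((sa+sb)^2) := Real.sqrt_le_sqrt hfin
      _ = sa + sb := Real.sqrt_sq (by positivity)
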